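/- arXiv:1711.06408 — 2 statements merged into one kernel-verified Lean document; each statement's English description precedes it below -/
import Mathlib

section
/- Let m ∈ ℕ and let b₁,…,b_m : ℝⁿ → ℝ be locally integrable with [b⃗]_{***} < ∞. Then for every cube Q ⊂ ℝⁿ with sides parallel to the axes, |Q|^{-2m} ∫_{Q^m} ∫_{Q^m} ∑_{i=1}^m |b_i(x_i) − b_i(y_i)| dy⃗ dx⃗ ≤ 2^m [b⃗]_{***}. -/
open MeasureTheory ENNReal

noncomputable section

/-- Euclidean space ℝⁿ. -/
abbrev En (n : ℕ) := EuclideanSpace ℝ (Fin n)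

/-- The (closed) cube in ℝⁿ centered at `c`, with side length `r` and sides
parallel to the coordinate axes. -/
def cube {n : ℕ} (c : En n) (r : ℝ) : Set (En n) := {y | ∀ i, |y i - c i| ≤ r / 2}

/-- The m-fold product `Q × ⋯ × Q ⊆ (ℝⁿ)^m` of the cube `Q = Q(c, r)`. -/
def cubeProd {n : ℕ} (m : ℕ) (c : En n) (r : ℝ) : Set (Fin m → En n) :=
  Set.univ.pi fun _ => cube c r

/-- Average `b_Q = |Q|⁻¹ ∫_Q b` over the cube `Q = Q(c, r)`. -/
def cubeAvg {n : ℕ} (b : En n → ℝ) (c : En n) (r : ℝ) : ℝ :=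
  (volume (cube c r)).toReal⁻¹ * ∫ x in cube c r, b x

/-- `[b]_* = sup_Q |Q|^{-(m+1)} ∫_Q ∫_{Q^m} |∑ᵢ (bᵢ(x) − bᵢ(yᵢ))| dy⃗ dx`. -/
def bracketStar {n m : ℕ} (b : Fin m → En n → ℝ) : ℝ≥0∞ :=
  ⨆ (c : En n) (r : ℝ) (_ : 0 < r),
    (volume (cube c r) ^ (m + 1))⁻¹ *
      ∫⁻ x in cube c r, ∫⁻ y in cubeProd m c r,
        ENNReal.ofReal |∑ i, (b i x - b i (y i))|

/-- `[b]_{**} = sup_Q |Q|^{-m} ∫_{Q^m} |∑ᵢ (bᵢ(xᵢ) − (bᵢ)_Q)| dx⃗`. -/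
def bracketStarStar {n m : ℕ} (b : Fin m → En n → ℝ) : ℝ≥0∞ :=
  ⨆ (c : En n) (r : ℝ) (_ : 0 < r),
    (volume (cube c r) ^ m)⁻¹ *
      ∫⁻ x in cubeProd m c r,
        ENNReal.ofReal |∑ i, (b i (x i) - cubeAvg (b i) c r)|

/-- `[b]_{***} = sup_Q |Q|^{-2m} ∫_{Q^m} ∫_{Q^m} |∑ᵢ (bᵢ(xᵢ) − bᵢ(yᵢ))| dy⃗ dx⃗`. -/
def bracketStarStarStar {n m : ℕ} (b : Fin m → En n → ℝ) : ℝ≥0∞ :=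
  ⨆ (c : En n) (r : ℝ) (_ : 0 < r),
    (volume (cube c r) ^ (2 * m))⁻¹ *
      ∫⁻ x in cubeProd m c r, ∫⁻ y in cubeProd m c r,
        ENNReal.ofReal |∑ i, (b i (x i) - b i (y i))|

/-- The BMO norm `‖b‖_{BMO} = sup_Q |Q|⁻¹ ∫_Q |b(x) − b_Q| dx`. -/
def bmoNorm {n : ℕ} (b : En n → ℝ) : ℝ≥0∞ :=
  ⨆ (c : En n) (r : ℝ) (_ : 0 < r),
    (volume (cube c r))⁻¹ * ∫⁻ x in cube c r, ENNReal.ofReal |b x - cubeAvg b c r|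

/-- A locally integrable function is in BMO if its BMO norm is finite. -/
def MemBMO {n : ℕ} (b : En n → ℝ) : Prop :=
  LocallyIntegrable b volume ∧ bmoNorm b < ⊤

/-! ### Auxiliary material -/

/-- Pointwise sign-decomposition: `∑ |aᵢ| ≤ ∑_{s ⊆ [m]} |∑ εᵢˢ aᵢ|`. -/
lemma abs_sum_aux (m : ℕ) (a : Fin m → ℝ) :
    ENNReal.ofReal (∑ i, |a i|) ≤
      ∑ s : Finset (Fin m), ENNReal.ofReal |∑ i, (if i ∈ s then (-1 : ℝ) else 1) * a i| := by
  classical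
  set t : Finset (Fin m) := Finset.univ.filter fun i => a i < 0 with ht
  have key : ∑ i, (if i ∈ t then (-1 : ℝ) else 1) * a i = ∑ i, |a i| := by
    refine Finset.sum_congr rfl fun i _ => ?_
    by_cases h : a i < 0
    · simp [ht, h, abs_of_neg h]
    · simp [ht, h, abs_of_nonneg (not_lt.mp h)]
  have h1 : ENNReal.ofReal (∑ i, |a i|) =
      ENNReal.ofReal |∑ i, (if i ∈ t then (-1 : ℝ) else 1) * a i| := by
    rw [key, abs_of_nonneg (Finset.sum_nonneg fun i _ => abs_nonneg _)]
  rw [h1]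
  exact Finset.single_le_sum (f := fun s : Finset (Fin m) =>
    ENNReal.ofReal |∑ i, (if i ∈ s then (-1 : ℝ) else 1) * a i|)
    (fun s _ => zero_le) (Finset.mem_univ t)

/-- The coordinate-swap map on `(ℝⁿ)^m × (ℝⁿ)^m` associated to a set `s` of indices. -/
def swapFun {n m : ℕ} (s : Finset (Fin m)) :
    ((Fin m → En n) × (Fin m → En n)) → ((Fin m → En n) × (Fin m → En n)) :=
  fun p => (fun i => if i ∈ s then p.2 i else p.1 i, fun i => if i ∈ s then p.1 i else p.2 i)

lemma swap_preserving {n m : ℕ} (s : Finset (Fin m)) :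
    MeasurePreserving (swapFun (n := n) s) volume volume := by
  classical
  set f : Fin m → (En n × En n) → (En n × En n) := fun i => if i ∈ s then Prod.swap else id
    with hf
  have hfp : ∀ i, MeasurePreserving (f i) (volume : Measure (En n × En n)) volume := by
    intro i; by_cases h : i ∈ s
    · show MeasurePreserving (if i ∈ s then Prod.swap else id) _ _
      rw [if_pos h]
      exact Measure.measurePreserving_swap
    · simpa [hf, h] using MeasurePreserving.id (volume : Measure (En n × En n))
  have hpi := @volume_preserving_pi (Fin m) _ (fun _ => En n × En n) (fun _ => En n × En n) _ _
    (fun _ => inferInstance) f hfp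
  have hA := volume_measurePreserving_arrowProdEquivProdArrow (En n) (En n) (Fin m)
  have hAsymm := MeasurePreserving.symm _ hA
  have hcomp := (hA.comp hpi).comp hAsymm
  have heq : swapFun (n := n) s
      = (MeasurableEquiv.arrowProdEquivProdArrow (En n) (En n) (Fin m)) ∘
        (fun (a : Fin m → En n × En n) i => f i (a i)) ∘
        (MeasurableEquiv.arrowProdEquivProdArrow (En n) (En n) (Fin m)).symm := by
    funext p
    refine Prod.ext ?_ ?_ <;> funext i <;> by_cases h : i ∈ s <;>
      simp [swapFun, hf, h, MeasurableEquiv.arrowProdEquivProdArrow, Equiv.arrowProdEquivProdArrow]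
  rw [heq]
  exact hcomp

lemma cube_measurable {n : ℕ} (c : En n) (r : ℝ) : MeasurableSet (cube c r) := by
  have : cube c r = ⋂ i, {y : En n | |y i - c i| ≤ r / 2} := by
    ext y; simp [cube, Set.mem_iInter]
  rw [this]
  exact MeasurableSet.iInter fun i => measurableSet_le (by fun_prop) measurable_const

lemma swapFun_preimage {n m : ℕ} (s : Finset (Fin m)) (c : En n) (r : ℝ) :
    swapFun (n := n) s ⁻¹' (cubeProd m c r ×ˢ cubeProd m c r) =
      cubeProd m c r ×ˢ cubeProd m c r := by
  classical
  ext p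
  simp only [cubeProd, Set.mem_preimage, Set.mem_prod, Set.mem_pi, Set.mem_univ, true_implies,
    swapFun]
  constructor
  · rintro ⟨h1, h2⟩
    refine ⟨fun i => ?_, fun i => ?_⟩
    · by_cases h : i ∈ s
      · simpa [h] using h2 i
      · simpa [h] using h1 i
    · by_cases h : i ∈ s
      · simpa [h] using h1 i
      · simpa [h] using h2 i
  · rintro ⟨h1, h2⟩
    refine ⟨fun i => ?_, fun i => ?_⟩ <;> by_cases h : i ∈ s <;> simp [h, h1 i, h2 i]

/-- if `[b]_{***} < ∞` then for every cube `Q = Q(c, r)`,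
`|Q|^{-2m} ∫_{Q^m} ∫_{Q^m} ∑ᵢ |bᵢ(xᵢ) − bᵢ(yᵢ)| dy⃗ dx⃗ ≤ 2^m [b]_{***}`. -/
theorem sum_abs_osc_le_pow_bracketStarStarStar {n m : ℕ} (b : Fin m → En n → ℝ)
    (hb : ∀ i, LocallyIntegrable (b i) volume)
    (hfin : bracketStarStarStar b < ⊤) (c : En n) (r : ℝ) (hr : 0 < r) :
    (volume (cube c r) ^ (2 * m))⁻¹ *
        (∫⁻ x in cubeProd m c r, ∫⁻ y in cubeProd m c r,
          ENNReal.ofReal (∑ i, |b i (x i) - b i (y i)|)) ≤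
      2 ^ m * bracketStarStarStar b := by
  classical
  have hQmeas : MeasurableSet (cube c r) := cube_measurable c r
  have hPmeas : MeasurableSet (cubeProd m c r) := MeasurableSet.univ_pi fun _ => hQmeas
  set P : Set (Fin m → En n) := cubeProd m c r with hPdef
  set μ : Measure (Fin m → En n) := volume.restrict P with hμ
  -- measurable representatives
  set g : Fin m → En n → ℝ := fun i => ((hb i).aestronglyMeasurable.aemeasurable).mk (b i)
    with hgdef
  have hgmeas : ∀ i, Measurable (g i) := fun i =>
    ((hb i).aestronglyMeasurable.aemeasurable).measurable_mk
  have hae : ∀ i, b i =ᵐ[volume] g i := fun i =>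
    ((hb i).aestronglyMeasurable.aemeasurable).ae_eq_mk
  have haeμ : ∀ᵐ x ∂μ, ∀ i, b i (x i) = g i (x i) := by
    rw [ae_all_iff]
    intro i
    apply ae_restrict_of_ae
    have h0 : (volume : Measure (Fin m → En n)) ((fun x => x i) ⁻¹' {z | ¬b i z = g i z}) = 0 := by
      rw [volume_pi]
      exact Measure.pi_eval_preimage_null _ (ae_iff.mp (hae i))
    exact ae_iff.mpr h0
  -- replace b by g in both iterated integrals
  have key1 : (∫⁻ x in P, ∫⁻ y in P, ENNReal.ofReal (∑ i, |b i (x i) - b i (y i)|)) =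
      ∫⁻ x in P, ∫⁻ y in P, ENNReal.ofReal (∑ i, |g i (x i) - g i (y i)|) := by
    refine lintegral_congr_ae (haeμ.mono fun x hx => ?_)
    refine lintegral_congr_ae (haeμ.mono fun y hy => ?_)
    dsimp only
    congr 1
    exact Finset.sum_congr rfl fun i _ => by rw [hx i, hy i]
  have key2 : (∫⁻ x in P, ∫⁻ y in P, ENNReal.ofReal |∑ i, (b i (x i) - b i (y i))|) =
      ∫⁻ x in P, ∫⁻ y in P, ENNReal.ofReal |∑ i, (g i (x i) - g i (y i))| := by
    refine lintegral_congr_ae (haeμ.mono fun x hx => ?_)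
    refine lintegral_congr_ae (haeμ.mono fun y hy => ?_)
    dsimp only
    congr 2
    exact Finset.sum_congr rfl fun i _ => by rw [hx i, hy i]
  -- measurability of the various integrands on the product space
  have hterm : ∀ i : Fin m, Measurable fun p : (Fin m → En n) × (Fin m → En n) =>
      g i (p.1 i) - g i (p.2 i) := fun i =>
    ((hgmeas i).comp ((measurable_pi_apply i).comp measurable_fst)).sub
      ((hgmeas i).comp ((measurable_pi_apply i).comp measurable_snd))
  have hmeasF : Measurable fun p : (Fin m → En n) × (Fin m → En n) =>
      ENNReal.ofReal (∑ i, |g i (p.1 i) - g i (p.2 i)|) :=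
    ENNReal.measurable_ofReal.comp (Finset.measurable_sum _ fun i _ => (hterm i).abs)
  have hmeasJ : Measurable fun p : (Fin m → En n) × (Fin m → En n) =>
      ENNReal.ofReal |∑ i, (g i (p.1 i) - g i (p.2 i))| :=
    ENNReal.measurable_ofReal.comp (Finset.measurable_sum _ fun i _ => hterm i).abs
  have hmeasG : ∀ s : Finset (Fin m), Measurable fun p : (Fin m → En n) × (Fin m → En n) =>
      ENNReal.ofReal |∑ i, (if i ∈ s then (-1 : ℝ) else 1) * (g i (p.1 i) - g i (p.2 i))| :=
    fun s => ENNReal.measurable_ofReal.comp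
      (Finset.measurable_sum _ fun i _ => measurable_const.mul (hterm i)).abs
  -- the product measure
  set π : Measure ((Fin m → En n) × (Fin m → En n)) := μ.prod μ with hπdef
  have hπ : π = (volume : Measure ((Fin m → En n) × (Fin m → En n))).restrict (P ×ˢ P) := by
    rw [hπdef, hμ, Measure.prod_restrict]
    rfl
  -- Fubini in both directions
  have fub1 : (∫⁻ x in P, ∫⁻ y in P, ENNReal.ofReal (∑ i, |g i (x i) - g i (y i)|)) =
      ∫⁻ p, ENNReal.ofReal (∑ i, |g i (p.1 i) - g i (p.2 i)|) ∂π :=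
    (MeasureTheory.lintegral_prod _ hmeasF.aemeasurable).symm
  have fub2 : (∫⁻ x in P, ∫⁻ y in P, ENNReal.ofReal |∑ i, (g i (x i) - g i (y i))|) =
      ∫⁻ p, ENNReal.ofReal |∑ i, (g i (p.1 i) - g i (p.2 i))| ∂π :=
    (MeasureTheory.lintegral_prod _ hmeasJ.aemeasurable).symm
  -- measure-preservation of the restricted swaps
  have hres : ∀ s : Finset (Fin m), MeasurePreserving (swapFun (n := n) s) π π := by
    intro s
    have h1 := (swap_preserving (n := n) s).restrict_preimage (hPmeas.prod hPmeas)
    rw [swapFun_preimage s c r] at h1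
    rw [hπ]
    exact h1
  -- the swapped integrals all coincide
  have swap_int : ∀ s : Finset (Fin m),
      (∫⁻ p, ENNReal.ofReal |∑ i, (if i ∈ s then (-1 : ℝ) else 1) *
          (g i (p.1 i) - g i (p.2 i))| ∂π) =
        ∫⁻ p, ENNReal.ofReal |∑ i, (g i (p.1 i) - g i (p.2 i))| ∂π := by
    intro s
    have hcomp := (hres s).lintegral_comp
      (f := fun p : (Fin m → En n) × (Fin m → En n) =>
        ENNReal.ofReal |∑ i, (g i (p.1 i) - g i (p.2 i))|) hmeasJ
    rw [← hcomp]
    refine lintegral_congr fun p => ?_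
    congr 2
    refine Finset.sum_congr rfl fun i _ => ?_
    by_cases h : i ∈ s <;> simp [swapFun, h] <;> ring
  -- the main estimate on the product space
  have main : (∫⁻ p, ENNReal.ofReal (∑ i, |g i (p.1 i) - g i (p.2 i)|) ∂π) ≤
      2 ^ m * ∫⁻ p, ENNReal.ofReal |∑ i, (g i (p.1 i) - g i (p.2 i))| ∂π := by
    calc (∫⁻ p, ENNReal.ofReal (∑ i, |g i (p.1 i) - g i (p.2 i)|) ∂π)
        ≤ ∫⁻ p, ∑ s : Finset (Fin m),
            ENNReal.ofReal |∑ i, (if i ∈ s then (-1 : ℝ) else 1) *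
              (g i (p.1 i) - g i (p.2 i))| ∂π :=
          lintegral_mono fun p => abs_sum_aux m fun i => g i (p.1 i) - g i (p.2 i)
      _ = ∑ s : Finset (Fin m), ∫⁻ p, ENNReal.ofReal |∑ i, (if i ∈ s then (-1 : ℝ) else 1) *
              (g i (p.1 i) - g i (p.2 i))| ∂π :=
          lintegral_finset_sum _ fun s _ => hmeasG s
      _ = ∑ _s : Finset (Fin m),
            ∫⁻ p, ENNReal.ofReal |∑ i, (g i (p.1 i) - g i (p.2 i))| ∂π :=
          Finset.sum_congr rfl fun s _ => swap_int s
      _ = 2 ^ m * ∫⁻ p, ENNReal.ofReal |∑ i, (g i (p.1 i) - g i (p.2 i))| ∂π := by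
          rw [Finset.sum_const, nsmul_eq_mul]
          congr 1
          simp [Fintype.card_finset]
  -- the bracket term at this cube
  have bracket_le : (volume (cube c r) ^ (2 * m))⁻¹ *
      (∫⁻ x in P, ∫⁻ y in P, ENNReal.ofReal |∑ i, (b i (x i) - b i (y i))|) ≤
        bracketStarStarStar b := by
    apply le_iSup_of_le c
    apply le_iSup_of_le r
    apply le_iSup_of_le hr
    exact le_rfl
  -- put everything together
  calc (volume (cube c r) ^ (2 * m))⁻¹ *
        (∫⁻ x in P, ∫⁻ y in P, ENNReal.ofReal (∑ i, |b i (x i) - b i (y i)|))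
      = (volume (cube c r) ^ (2 * m))⁻¹ *
          ∫⁻ p, ENNReal.ofReal (∑ i, |g i (p.1 i) - g i (p.2 i)|) ∂π := by
        rw [key1, fub1]
    _ ≤ (volume (cube c r) ^ (2 * m))⁻¹ *
          (2 ^ m * ∫⁻ p, ENNReal.ofReal |∑ i, (g i (p.1 i) - g i (p.2 i))| ∂π) :=
        mul_le_mul_right main _
    _ = 2 ^ m * ((volume (cube c r) ^ (2 * m))⁻¹ *
          ∫⁻ p, ENNReal.ofReal |∑ i, (g i (p.1 i) - g i (p.2 i))| ∂π) := by
        rw [mul_left_comm]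
    _ = 2 ^ m * ((volume (cube c r) ^ (2 * m))⁻¹ *
          ∫⁻ x in P, ∫⁻ y in P, ENNReal.ofReal |∑ i, (b i (x i) - b i (y i))|) := by
        rw [key2, fub2]
    _ ≤ 2 ^ m * bracketStarStarStar b := mul_le_mul_right bracket_le _

end
end

section
/- Let m ∈ ℕ and let b₁,…,b_m : ℝⁿ → ℝ be locally integrable with [b⃗]_{***} < ∞. Then each b_i belongs to BMO, and moreover ‖b_i‖_BMO ≤ 2^m [b⃗]_{***} for every i = 1,…,m. -/
open MeasureTheory ENNReal

noncomputable section

section Aux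
open Set Function Filter

variable {n : ℕ}


lemma cube_isClosed (c : En n) (r : ℝ) : IsClosed (cube c r) := by
  have : cube c r = ⋂ i, {y : En n | |y i - c i| ≤ r / 2} := by
    ext y; simp [cube]
  rw [this]
  refine isClosed_iInter fun i => ?_
  exact isClosed_le (((EuclideanSpace.proj (𝕜 := ℝ) i).continuous.sub continuous_const).abs)
    continuous_const

lemma cube_measurableSet (c : En n) (r : ℝ) : MeasurableSet (cube c r) :=
  (cube_isClosed c r).measurableSet

lemma cube_isCompact (c : En n) (r : ℝ) : IsCompact (cube c r) := by
  rcases le_or_gt 0 r with hr | hr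
  · refine (isCompact_closedBall c (Real.sqrt (n * (r/2)^2))).of_isClosed_subset
      (cube_isClosed c r) ?_
    intro y hy
    rw [Metric.mem_closedBall, EuclideanSpace.dist_eq]
    refine Real.sqrt_le_sqrt ?_
    calc ∑ i, dist (y i) (c i) ^ 2 ≤ ∑ _i : Fin n, (r/2)^2 := by
          refine Finset.sum_le_sum fun i _ => ?_
          have := hy i
          rw [Real.dist_eq]
          exact pow_le_pow_left₀ (abs_nonneg _) this 2
      _ = n * (r/2)^2 := by simp [Finset.sum_const, mul_comm]
  · rcases Nat.eq_zero_or_pos n with hn | hn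
    · subst hn
      exact Set.Subsingleton.isCompact (Set.subsingleton_of_subsingleton)
    · have : cube c r = ∅ := by
        ext y
        simp only [cube, Set.mem_setOf_eq, Set.mem_empty_iff_false, iff_false]
        intro h
        have := h ⟨0, hn⟩
        nlinarith [abs_nonneg (y ⟨0, hn⟩ - c ⟨0, hn⟩)]
      rw [this]; exact isCompact_empty

lemma volume_cube_lt_top (c : En n) (r : ℝ) : volume (cube c r) < ⊤ :=
  (cube_isCompact c r).measure_lt_top

lemma ball_subset_cube (c : En n) (r : ℝ) : Metric.ball c (r/2) ⊆ cube c r := by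
  intro y hy i
  have h1 : dist (y i) (c i) ≤ dist y c := by
    rw [EuclideanSpace.dist_eq]
    have := Real.sqrt_le_sqrt (Finset.single_le_sum
      (f := fun j => dist (y j) (c j) ^ 2) (fun j _ => sq_nonneg _) (Finset.mem_univ i))
    rwa [Real.sqrt_sq dist_nonneg] at this
  rw [← Real.dist_eq]
  exact h1.trans (le_of_lt hy)

lemma volume_cube_pos {c : En n} {r : ℝ} (hr : 0 < r) : 0 < volume (cube c r) :=
  lt_of_lt_of_le (Metric.measure_ball_pos volume c (by positivity))
    (measure_mono (ball_subset_cube c r))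

section measures
variable {E : Type*} [MeasurableSpace E] (μ : Measure E) [IsFiniteMeasure μ]

variable {E : Type*} [MeasurableSpace E] (μ : Measure E) [IsFiniteMeasure μ]

lemma pi_univ_pow (k : ℕ) : (Measure.pi fun _ : Fin k => μ) Set.univ = (μ Set.univ) ^ k := by
  rw [Measure.pi_univ, Finset.prod_const, Finset.card_univ, Fintype.card_fin]

lemma pi_map_eval {k : ℕ} (j : Fin k) :
    (Measure.pi fun _ : Fin k => μ).map (Function.eval j) = ((μ Set.univ) ^ (k - 1)) • μ := by
  refine Measure.ext fun s hs => ?_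
  rw [Measure.map_apply (measurable_pi_apply j) hs, Measure.smul_apply, smul_eq_mul,
    Set.eval_preimage, Measure.pi_pi]
  have h1 : ∀ i, μ (update (fun _ => (Set.univ : Set E)) j s i)
      = update (fun _ => μ Set.univ) j (μ s) i := fun i =>
    (Function.apply_update (fun _ t => μ t) (fun _ => (Set.univ : Set E)) j s i)
  rw [Finset.prod_congr rfl (fun i _ => h1 i), Finset.prod_update_of_mem (Finset.mem_univ j),
    Finset.prod_const]
  have hcard : (Finset.univ \ {j}).card = k - 1 := by
    rw [Finset.sdiff_singleton_eq_erase, Finset.card_erase_of_mem (Finset.mem_univ j),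
      Finset.card_univ, Fintype.card_fin]
  rw [hcard, mul_comm]

lemma integrable_comp_eval {k : ℕ} (j : Fin k) {f : E → ℝ} (hsm : StronglyMeasurable f)
    (hf : Integrable f μ) :
    Integrable (fun x : Fin k → E => f (x j)) (Measure.pi fun _ => μ) := by
  have h1 : Integrable f (((μ Set.univ) ^ (k - 1)) • μ) :=
    hf.smul_measure (pow_ne_top (measure_ne_top μ _))
  rw [← pi_map_eval μ j] at h1
  exact (integrable_map_measure hsm.aestronglyMeasurable
    (measurable_pi_apply j).aemeasurable).mp h1

lemma integral_comp_eval {k : ℕ} (j : Fin k) (f : E → ℝ) (hsm : StronglyMeasurable f) :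
    ∫ x, f (x j) ∂(Measure.pi fun _ : Fin k => μ) = ((μ Set.univ) ^ (k - 1)).toReal * ∫ x, f x ∂μ := by
  have := integral_map (μ := Measure.pi fun _ : Fin k => μ) (φ := Function.eval j)
    (measurable_pi_apply j).aemeasurable (f := f) ?h
  · rw [← this, pi_map_eval, integral_smul_measure, smul_eq_mul]
  · rw [pi_map_eval]
    exact hsm.aestronglyMeasurable


end measures


lemma restrict_pi {E : Type*} [MeasurableSpace E] (ν : Measure E) [SigmaFinite ν] {k : ℕ}
    {Q : Set E} (hQ : MeasurableSet Q) :
    (Measure.pi fun _ : Fin k => ν).restrict (Set.univ.pi fun _ => Q)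
      = Measure.pi fun _ : Fin k => ν.restrict Q := by
  refine (Measure.pi_eq (μ := fun _ : Fin k => ν.restrict Q) fun s hs => ?_).symm
  rw [Measure.restrict_apply (MeasurableSet.univ_pi hs), ← Set.pi_inter_distrib, Measure.pi_pi]
  simp_rw [Measure.restrict_apply (hs _)]

lemma ofReal_abs_integral_le {α : Type*} [MeasurableSpace α] {m : Measure α} {g : α → ℝ}
    (hg : Integrable g m) :
    ENNReal.ofReal |∫ a, g a ∂m| ≤ ∫⁻ a, ENNReal.ofReal |g a| ∂m := by
  calc ENNReal.ofReal |∫ a, g a ∂m| ≤ ENNReal.ofReal (∫ a, |g a| ∂m) :=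
        ENNReal.ofReal_le_ofReal
          (by simpa [Real.norm_eq_abs] using norm_integral_le_integral_norm g)
    _ = ∫⁻ a, ENNReal.ofReal |g a| ∂m :=
        ofReal_integral_eq_lintegral_ofReal hg.abs (Filter.Eventually.of_forall fun a => abs_nonneg _)


def insC {n M : ℕ} (i : Fin (M+1)) (x : En n) (x' : Fin M → En n) : Fin (M+1) → En n :=
  Fin.insertNth i x x'

@[simp] lemma insC_same {n M : ℕ} (i : Fin (M+1)) (x : En n) (x' : Fin M → En n) :
    insC i x x' i = x := Fin.insertNth_apply_same (α := fun _ : Fin (M+1) => En n) i x x'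

@[simp] lemma insC_succAbove {n M : ℕ} (i : Fin (M+1)) (x : En n) (x' : Fin M → En n)
    (j' : Fin M) : insC i x x' (i.succAbove j') = x' j' :=
  Fin.insertNth_apply_succAbove (α := fun _ : Fin (M+1) => En n) i x x' j'

lemma key_ineq {n M : ℕ} (c : En n) (r : ℝ) (hr : 0 < r) (b : Fin (M+1) → En n → ℝ)
    (hsm : ∀ j, StronglyMeasurable (b j))
    (hint : ∀ j, IntegrableOn (b j) (cube c r)) (i : Fin (M+1)) :
    (volume (cube c r))⁻¹ * (∫⁻ x in cube c r, ENNReal.ofReal |b i x - cubeAvg (b i) c r|) ≤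
      (volume (cube c r) ^ (2 * (M+1)))⁻¹ *
        ∫⁻ x in cubeProd (M+1) c r, ∫⁻ y in cubeProd (M+1) c r,
          ENNReal.ofReal |∑ j, (b j (x j) - b j (y j))| := by
  set Q := cube c r with hQdef
  set μ : Measure (En n) := volume.restrict Q with hμdef
  haveI : IsFiniteMeasure μ := ⟨by
    rw [hμdef, Measure.restrict_apply_univ]; exact volume_cube_lt_top c r⟩
  have hμuniv : μ Set.univ = volume Q := by rw [hμdef, Measure.restrict_apply_univ]
  set V : ℝ≥0∞ := volume Q with hVdef
  have hV0 : V ≠ 0 := (volume_cube_pos hr).ne'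
  have hVt : V ≠ ⊤ := (volume_cube_lt_top c r).ne
  set v : ℝ := V.toReal with hvdef
  have hv : 0 < v := ENNReal.toReal_pos hV0 hVt
  set P : Measure (Fin (M+1) → En n) := Measure.pi fun _ => μ with hP
  set P' : Measure (Fin M → En n) := Measure.pi fun _ => μ with hP'
  have hres : (volume : Measure (Fin (M+1) → En n)).restrict (cubeProd (M+1) c r) = P := by
    rw [hP, hμdef, show (volume : Measure (Fin (M+1) → En n)) = Measure.pi fun _ => volume from
      MeasureTheory.volume_pi, cubeProd]
    exact restrict_pi volume (cube_measurableSet c r)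
  have hPuniv : P Set.univ = V ^ (M+1) := by rw [hP, pi_univ_pow, hμuniv]
  have hP'univ : P' Set.univ = V ^ M := by rw [hP', pi_univ_pow, hμuniv]
  have hbint : ∀ j, Integrable (b j) μ := fun j => hint j
  set cc : Fin (M+1) → ℝ := fun j => ∫ x, b j x ∂μ with hcc
  have hAv : cubeAvg (b i) c r = v⁻¹ * cc i := rfl
  set F : (Fin (M+1) → En n) → (Fin (M+1) → En n) → ℝ :=
    fun X y => ∑ j, (b j (X j) - b j (y j)) with hF
  have hFint : ∀ X, Integrable (F X) P := fun X =>
    integrable_finset_sum _ fun j _ =>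
      (integrable_const _).sub (integrable_comp_eval μ j (hsm j) (hbint j))
  have inner_eq : ∀ X, ∫ y, F X y ∂P = ∑ j, (v^(M+1) * b j (X j) - v^M * cc j) := by
    intro X
    show (∫ y, ∑ j, (b j (X j) - b j (y j)) ∂P) = _
    rw [integral_finset_sum (μ := P) Finset.univ
      (f := fun (j : Fin (M+1)) (y : Fin (M+1) → En n) => b j (X j) - b j (y j))
      (fun j _ => (integrable_const _).sub (integrable_comp_eval μ j (hsm j) (hbint j)))]
    refine Finset.sum_congr rfl fun j _ => ?_
    rw [integral_sub (integrable_const _) (integrable_comp_eval μ j (hsm j) (hbint j)),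
      integral_const, measureReal_def, integral_comp_eval μ j (b j) (hsm j), hPuniv]
    simp [ENNReal.toReal_pow, smul_eq_mul, hμuniv, hvdef, hcc]
  have outer_int : ∀ (x : En n) (j : Fin (M+1)),
      Integrable (fun x' : Fin M → En n =>
        v^(M+1) * b j (insC i x x' j) - v^M * cc j) P' := by
    intro x j
    refine Integrable.sub ?_ (integrable_const _)
    rcases eq_or_ne j i with rfl | hji
    · simp only [insC_same]; exact integrable_const _
    · obtain ⟨j', rfl⟩ := Fin.exists_succAbove_eq hji
      simp only [insC_succAbove]
      exact (integrable_comp_eval μ j' (hsm _) (hbint _)).const_mul _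
  have outer_eq : ∀ x : En n,
      ∫ x', (∑ j, (v^(M+1) * b j (insC i x x' j) - v^M * cc j)) ∂P'
        = v^(2*M+1) * b i x - v^(2*M) * cc i := by
    intro x
    rw [integral_finset_sum _ (fun j _ => outer_int x j)]
    rw [Fin.sum_univ_succAbove (fun j =>
      ∫ x', (v^(M+1) * b j (insC i x x' j) - v^M * cc j) ∂P') i]
    have hterm_i : (∫ x' : Fin M → En n,
        (v^(M+1) * b i (insC i x x' i) - v^M * cc i) ∂P')
        = v^M * (v^(M+1) * b i x - v^M * cc i) := by
      simp only [insC_same]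
      rw [integral_const, measureReal_def, hP'univ]
      simp [ENNReal.toReal_pow, smul_eq_mul, hvdef]
    have hterm : ∀ j' : Fin M, (∫ x' : Fin M → En n,
        (v^(M+1) * b (i.succAbove j') (insC i x x' (i.succAbove j'))
          - v^M * cc (i.succAbove j')) ∂P') = 0 := by
      intro j'
      simp only [insC_succAbove]
      rw [integral_sub ((integrable_comp_eval μ j' (hsm _) (hbint _)).const_mul _)
        (integrable_const _), integral_const, measureReal_def, hP'univ,
        integral_const_mul, integral_comp_eval μ j' _ (hsm _), hμuniv]
      have hM : 1 ≤ M := (Fin.pos j')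
      have e0 : v^(M+1) * v^(M-1) = v^M * v^M := by
        rw [← pow_add, ← pow_add]; congr 1; omega
      have : (V ^ (M-1)).toReal = v^(M-1) := by rw [ENNReal.toReal_pow]
      rw [this]
      have : ((V ^ M).toReal : ℝ) = v ^ M := by rw [ENNReal.toReal_pow]
      rw [this, smul_eq_mul]
      have hccs : (∫ x, b (i.succAbove j') x ∂μ) = cc (i.succAbove j') := rfl
      rw [hccs]
      linear_combination cc (i.succAbove j') * e0
    rw [hterm_i]
    rw [Finset.sum_congr rfl (fun j' _ => hterm j'), Finset.sum_const_zero, add_zero]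
    have e1 : v^M * v^(M+1) = v^(2*M+1) := by rw [← pow_add]; congr 1; omega
    have e2 : v^M * v^M = v^(2*M) := by rw [← pow_add]; congr 1; omega
    calc v^M * (v^(M+1) * b i x - v^M * cc i)
        = (v^M * v^(M+1)) * b i x - (v^M * v^M) * cc i := by ring
      _ = v^(2*M+1) * b i x - v^(2*M) * cc i := by rw [e1, e2]
  have hJ : ∀ x : En n,
      (∫ x', (∫ y, F (insC i x x') y ∂P) ∂P') = v^(2*M+1) * b i x - v^(2*M) * cc i := by
    intro x
    rw [← outer_eq x]
    exact integral_congr_ae (Filter.Eventually.of_forall fun x' => inner_eq _)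
  have hGint : ∀ x : En n, Integrable (fun x' => ∫ y, F (insC i x x') y ∂P) P' := by
    intro x
    have heq : (fun x' : Fin M → En n => ∫ y, F (insC i x x') y ∂P)
        = fun x' => ∑ j, (v^(M+1) * b j (insC i x x' j) - v^M * cc j) :=
      funext fun x' => inner_eq _
    rw [heq]
    exact integrable_finset_sum _ fun j _ => outer_int x j
  set L : (Fin (M+1) → En n) → ℝ≥0∞ := fun X => ∫⁻ y, ENNReal.ofReal |F X y| ∂P with hL
  have hptwise : ∀ x : En n, ENNReal.ofReal |b i x - cubeAvg (b i) c r| * V^(2*M+1) ≤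
      ∫⁻ x', L (insC i x x') ∂P' := by
    intro x
    have e3 : v^(2*M+1) * v⁻¹ = v^(2*M) := by
      rw [pow_succ, mul_assoc, mul_inv_cancel₀ hv.ne', mul_one]
    have habs : |v^(2*M+1) * b i x - v^(2*M) * cc i|
        = v^(2*M+1) * |b i x - cubeAvg (b i) c r| := by
      have h4 : v^(2*M+1) * b i x - v^(2*M) * cc i
          = v^(2*M+1) * (b i x - v⁻¹ * cc i) := by
        rw [mul_sub, ← mul_assoc, e3]
      rw [hAv, h4, abs_mul, abs_of_nonneg (pow_pos hv _).le]
    have h1 : ENNReal.ofReal |b i x - cubeAvg (b i) c r| * V^(2*M+1)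
        = ENNReal.ofReal |∫ x', (∫ y, F (insC i x x') y ∂P) ∂P'| := by
      rw [hJ x, habs, ENNReal.ofReal_mul (le_of_lt (pow_pos hv _)), mul_comm]
      congr 1
      rw [← ENNReal.ofReal_toReal hVt, ← ENNReal.ofReal_pow ENNReal.toReal_nonneg]
    rw [h1]
    calc ENNReal.ofReal |∫ x', (∫ y, F (insC i x x') y ∂P) ∂P'|
        ≤ ∫⁻ x', ENNReal.ofReal |∫ y, F (insC i x x') y ∂P| ∂P' :=
          ofReal_abs_integral_le (hGint x)
      _ ≤ ∫⁻ x', L (insC i x x') ∂P' :=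
          lintegral_mono fun x' => ofReal_abs_integral_le (hFint _)
  have hFmeas : Measurable (fun p : (Fin (M+1) → En n) × (Fin (M+1) → En n) =>
      ENNReal.ofReal |F p.1 p.2|) := by
    refine ENNReal.measurable_ofReal.comp ?_
    refine Measurable.abs ?_
    refine Finset.measurable_sum _ fun j _ => ?_
    exact ((hsm j).measurable.comp ((measurable_pi_apply j).comp measurable_fst)).sub
      ((hsm j).measurable.comp ((measurable_pi_apply j).comp measurable_snd))
  have hLmeas : Measurable L := hFmeas.lintegral_prod_right'
  have hT : (∫⁻ X, L X ∂P) = ∫⁻ x, (∫⁻ x', L (insC i x x') ∂P') ∂μ := by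
    set e := MeasurableEquiv.piFinSuccAbove (fun _ : Fin (M+1) => En n) i with he
    have mp : MeasurePreserving (⇑e.symm) (μ.prod P') P :=
      (measurePreserving_piFinSuccAbove (fun _ : Fin (M+1) => μ) i).symm e
    have h1 := mp.lintegral_comp_emb e.symm.measurableEmbedding L
    rw [← h1]
    have hsymm : ∀ z : En n × (Fin M → En n), e.symm z = insC i z.1 z.2 := by
      intro z
      simp [he, MeasurableEquiv.piFinSuccAbove_symm_apply, Fin.insertNthEquiv,
        Equiv.coe_fn_mk, insC]
    have hfe : ∀ z : En n × (Fin M → En n), L (e.symm z) = L (insC i z.1 z.2) :=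
      fun z => by rw [hsymm z]
    calc ∫⁻ z, L (e.symm z) ∂(μ.prod P')
        = ∫⁻ z : En n × (Fin M → En n), L (insC i z.1 z.2) ∂(μ.prod P') :=
          lintegral_congr hfe
      _ = ∫⁻ x, ∫⁻ x', L (insC i x x') ∂P' ∂μ := by
          refine lintegral_prod _ (Measurable.aemeasurable (μ := μ.prod P') ?_)
          rw [show (fun z : En n × (Fin M → En n) => L (insC i z.1 z.2))
            = fun z => L (e.symm z) from funext fun z => (hfe z).symm]
          exact hLmeas.comp e.symm.measurable
  have hRHS : (∫⁻ x in cubeProd (M+1) c r, ∫⁻ y in cubeProd (M+1) c r,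
      ENNReal.ofReal |∑ j, (b j (x j) - b j (y j))|) = ∫⁻ X, L X ∂P := by
    rw [hres]
  rw [hRHS]
  have main1 : (∫⁻ x, ENNReal.ofReal |b i x - cubeAvg (b i) c r| ∂μ) * V^(2*M+1)
      ≤ ∫⁻ X, L X ∂P := by
    rw [← lintegral_mul_const' _ _ (pow_ne_top hVt), hT]
    exact lintegral_mono fun x => hptwise x
  have main2 : (∫⁻ x, ENNReal.ofReal |b i x - cubeAvg (b i) c r| ∂μ)
      ≤ (V^(2*M+1))⁻¹ * ∫⁻ X, L X ∂P := by
    rw [← ENNReal.div_eq_inv_mul,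
      ENNReal.le_div_iff_mul_le (Or.inl (pow_ne_zero _ hV0)) (Or.inl (pow_ne_top hVt))]
    exact main1
  have hexp : 2*(M+1) = (2*M+1)+1 := by omega
  calc V⁻¹ * (∫⁻ x, ENNReal.ofReal |b i x - cubeAvg (b i) c r| ∂μ)
      ≤ V⁻¹ * ((V^(2*M+1))⁻¹ * ∫⁻ X, L X ∂P) := mul_le_mul_right main2 _
    _ = (V ^ (2*(M+1)))⁻¹ * ∫⁻ X, L X ∂P := by
        have hpow : (V ^ (2*(M+1)))⁻¹ = V⁻¹ * (V^(2*M+1))⁻¹ := by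
          rw [← ENNReal.mul_inv (Or.inl hV0) (Or.inl hVt)]
          congr 1
          rw [← pow_succ']
          congr 1
        rw [← mul_assoc, ← hpow]


end Aux

set_option maxHeartbeats 2000000 in
/-- if `b₁, …, b_m` are locally integrable with `[b]_{***} < ∞`,
then each `bᵢ` belongs to BMO, with `‖bᵢ‖_{BMO} ≤ 2^m [b]_{***}`. -/

theorem memBMO_of_bracketStarStarStar_lt_top {n m : ℕ} (b : Fin m → En n → ℝ)
    (hb : ∀ i, LocallyIntegrable (b i) volume)
    (hfin : bracketStarStarStar b < ⊤) :
    ∀ i, MemBMO (b i) ∧ bmoNorm (b i) ≤ 2 ^ m * bracketStarStarStar b := by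
  intro i
  have hm0 : m ≠ 0 := fun h => by subst h; exact i.elim0
  obtain ⟨M, rfl⟩ := Nat.exists_eq_succ_of_ne_zero hm0
  have key2 : bmoNorm (b i) ≤ bracketStarStarStar b := by
    rw [bmoNorm]
    refine iSup_le fun c => iSup_le fun r => iSup_le fun hr => ?_
    obtain ⟨g, hgm, hae⟩ : ∃ g : Fin (M+1) → En n → ℝ,
        (∀ j, StronglyMeasurable (g j)) ∧ ∀ j, b j =ᵐ[volume] g j :=
      ⟨fun j => ((hb j).aestronglyMeasurable).mk (b j),
        fun j => ((hb j).aestronglyMeasurable).stronglyMeasurable_mk,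
        fun j => ((hb j).aestronglyMeasurable).ae_eq_mk⟩
    have haeQ : ∀ j, b j =ᵐ[volume.restrict (cube c r)] g j :=
      fun j => ae_restrict_of_ae (hae j)
    have hgint : ∀ j, IntegrableOn (g j) (cube c r) := fun j =>
      ((hb j).integrableOn_isCompact (cube_isCompact c r)).congr (haeQ j)
    have hAvg : ∀ j, cubeAvg (b j) c r = cubeAvg (g j) c r := fun j => by
      unfold cubeAvg
      rw [integral_congr_ae (haeQ j)]
    have hLHS : (∫⁻ x in cube c r, ENNReal.ofReal |b i x - cubeAvg (b i) c r|)
        = ∫⁻ x in cube c r, ENNReal.ofReal |g i x - cubeAvg (g i) c r| := by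
      rw [hAvg i]
      exact lintegral_congr_ae ((haeQ i).mono fun x hx => by simp only [hx])
    set μ : Measure (En n) := volume.restrict (cube c r) with hμdef
    haveI : IsFiniteMeasure μ := ⟨by
      rw [hμdef, Measure.restrict_apply_univ]; exact volume_cube_lt_top c r⟩
    have hres : (volume : Measure (Fin (M+1) → En n)).restrict (cubeProd (M+1) c r)
        = Measure.pi fun _ : Fin (M+1) => μ := by
      rw [hμdef, show (volume : Measure (Fin (M+1) → En n)) = Measure.pi fun _ => volume from
        MeasureTheory.volume_pi, cubeProd]
      exact restrict_pi volume (cube_measurableSet c r)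
    have haePi : ∀ᵐ X ∂(Measure.pi fun _ : Fin (M+1) => μ), ∀ j, b j (X j) = g j (X j) := by
      rw [MeasureTheory.ae_all_iff]
      intro j
      exact (Measure.tendsto_eval_ae_ae (μ := fun _ : Fin (M+1) => μ) (i := j)).eventually (haeQ j)
    have hRHSeq : (∫⁻ X in cubeProd (M+1) c r, ∫⁻ y in cubeProd (M+1) c r,
          ENNReal.ofReal |∑ j, (b j (X j) - b j (y j))|)
        = ∫⁻ X in cubeProd (M+1) c r, ∫⁻ y in cubeProd (M+1) c r,
          ENNReal.ofReal |∑ j, (g j (X j) - g j (y j))| := by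
      rw [hres]
      refine lintegral_congr_ae (haePi.mono fun X hX => ?_)
      refine lintegral_congr_ae (haePi.mono fun y hy => ?_)
      simp only [hX, hy]
    have hkey := key_ineq c r hr g hgm hgint i
    rw [hLHS]
    calc (volume (cube c r))⁻¹ *
          ∫⁻ x in cube c r, ENNReal.ofReal |g i x - cubeAvg (g i) c r|
        ≤ (volume (cube c r) ^ (2*(M+1)))⁻¹ *
          ∫⁻ X in cubeProd (M+1) c r, ∫⁻ y in cubeProd (M+1) c r,
            ENNReal.ofReal |∑ j, (g j (X j) - g j (y j))| := hkey
      _ = (volume (cube c r) ^ (2*(M+1)))⁻¹ *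
          ∫⁻ X in cubeProd (M+1) c r, ∫⁻ y in cubeProd (M+1) c r,
            ENNReal.ofReal |∑ j, (b j (X j) - b j (y j))| := by rw [hRHSeq]
      _ ≤ bracketStarStarStar b := by
          rw [bracketStarStarStar]
          exact le_iSup_of_le c (le_iSup_of_le r (le_iSup_of_le hr le_rfl))
  have h2m : (1 : ℝ≥0∞) ≤ 2 ^ (M+1) := by simpa using pow_le_pow_left₀ (by norm_num) (by norm_num : (1:ℝ≥0∞) ≤ 2) (M+1)
  have hle : bmoNorm (b i) ≤ 2 ^ (M+1) * bracketStarStarStar b :=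
    key2.trans (le_mul_of_one_le_left zero_le h2m)
  refine ⟨⟨hb i, ?_⟩, hle⟩
  refine lt_of_le_of_lt hle ?_
  exact ENNReal.mul_lt_top (ENNReal.pow_lt_top (by norm_num : (2:ℝ≥0∞) < ⊤)) hfin

end
end
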